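/- Let J ∈ ℝ^{n×m} be of full column rank, partitioned by P into column blocks J_{k_1}, …, J_{k_r}. Then Σ_{i=1}^r log det(J_{k_i}^T J_{k_i}) - log det(J^T J) ≥ 0, with equality if and only if J_{k_i}^T J_{k_j} = 0 for all i ≠ j. -/

import Mathlib

open Matrix

lemma posDef_submatrix_inj {m n : Type*} [Fintype m] [Fintype n] [DecidableEq m] [DecidableEq n]
    {M : Matrix n n ℝ} (hM : M.PosDef) {e : m → n} (he : Function.Injective e) :
    (M.submatrix e e).PosDef := by
  set E : Matrix n m ℝ := Matrix.of fun j a => if j = e a then 1 else 0 with hE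
  have hsub : M.submatrix e e = Eᴴ * M * E := by
    ext a b
    simp [hE, mul_apply, Finset.sum_ite_eq, Finset.sum_ite_eq', ite_mul, mul_ite,
      conjTranspose_apply]
  refine posDef_iff_dotProduct_mulVec.mpr ⟨?_, ?_⟩
  · have h1 := hM.1
    show (M.submatrix e e)ᴴ = M.submatrix e e
    rw [conjTranspose_submatrix, h1]
  · intro x hx
    obtain ⟨a, ha⟩ := Function.ne_iff.mp hx
    have hEx : E *ᵥ x ≠ 0 := by
      intro h0
      apply ha
      have := congrFun h0 (e a)
      simpa [hE, mulVec, dotProduct, he.eq_iff, ite_mul] using this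
    have hpos := (posDef_iff_dotProduct_mulVec.mp hM).2 (x := E *ᵥ x) hEx
    rw [hsub]
    simpa only [star_mulVec, dotProduct_mulVec, vecMul_vecMul] using hpos

lemma one_le_prod_real {ι : Type*} {s : Finset ι} {f : ι → ℝ} (hf : ∀ i ∈ s, 1 ≤ f i) :
    1 ≤ ∏ i ∈ s, f i ∧ ((∏ i ∈ s, f i) = 1 ↔ ∀ i ∈ s, f i = 1) := by
  classical
  induction s using Finset.induction with
  | empty => simp
  | @insert a s ha ih =>
    have hfa : 1 ≤ f a := hf a (Finset.mem_insert_self a s)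
    obtain ⟨ih1, ih2⟩ := ih (fun i hi => hf i (Finset.mem_insert_of_mem hi))
    rw [Finset.prod_insert ha]
    constructor
    · nlinarith
    · constructor
      · intro h
        have h1 : f a = 1 ∧ ∏ i ∈ s, f i = 1 := by constructor <;> nlinarith
        intro i hi
        rcases Finset.mem_insert.mp hi with rfl | hi
        · exact h1.1
        · exact ih2.mp h1.2 i hi
      · intro h
        rw [h a (Finset.mem_insert_self a s), one_mul]
        exact ih2.mpr fun i hi => h i (Finset.mem_insert_of_mem hi)

lemma posDef_of_posSemidef_det_ne_zero {n : Type*} [Fintype n] [DecidableEq n]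
    {P : Matrix n n ℝ} (hP : P.PosSemidef) (hdet : P.det ≠ 0) : P.PosDef := by
  refine posDef_iff_dotProduct_mulVec.mpr ⟨hP.1, fun x hx => lt_of_le_of_ne ((posSemidef_iff_dotProduct_mulVec.mp hP).2 x) (Ne.symm fun h0 => hx ?_)⟩
  have hPx : P *ᵥ x = 0 := (hP.dotProduct_mulVec_zero_iff x).mp h0
  have : P⁻¹ *ᵥ (P *ᵥ x) = x := by
    rw [mulVec_mulVec, nonsing_inv_mul P (Ne.isUnit hdet), one_mulVec]
  rw [← this, hPx, mulVec_zero]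

open scoped MatrixOrder in
lemma det_add_posSemidef {n : Type*} [Fintype n] [DecidableEq n]
    {P S : Matrix n n ℝ} (hP : P.PosSemidef) (hS : S.PosSemidef) (hPS : (P + S).PosDef) :
    P.det ≤ (P + S).det ∧ ((P + S).det = P.det ↔ S = 0) := by
  by_cases hdet : P.det = 0
  · refine ⟨hdet ▸ hPS.det_pos.le, ⟨fun h => absurd (h.trans hdet) hPS.det_pos.ne', ?_⟩⟩
    rintro rfl; simp
  · have hPd : P.PosDef := posDef_of_posSemidef_det_ne_zero hP hdet
    set B := CFC.sqrt P with hBdef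
    have hBB : B * B = P := CFC.sqrt_mul_sqrt_self P hPd.posSemidef.nonneg
    have hBpsd : B.PosSemidef := Matrix.nonneg_iff_posSemidef.mp (CFC.sqrt_nonneg P)
    have hBH : B.IsHermitian := hBpsd.1
    have hdetB : B.det ≠ 0 := by
      intro h
      apply hdet
      rw [← hBB, det_mul, h, zero_mul]
    have hBu : IsUnit B.det := Ne.isUnit hdetB
    have hBinvH : B⁻¹.IsHermitian := hBH.inv
    set T := B⁻¹ * S * B⁻¹ with hTdef
    have hT : T.PosSemidef := by
      have := hS.conjTranspose_mul_mul_same (B := B⁻¹)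
      rwa [hBinvH.eq] at this
    have hBTB : B * T * B = S := by
      rw [hTdef]
      rw [Matrix.mul_assoc, Matrix.mul_assoc, nonsing_inv_mul B hBu, Matrix.mul_one,
        ← Matrix.mul_assoc, mul_nonsing_inv B hBu, Matrix.one_mul]
    have key : P + S = B * (1 + T) * B := by
      rw [mul_add, mul_one, add_mul, hBB, hBTB]
    -- spectral analysis of 1 + T
    have hTH := hT.1
    set lam := hTH.eigenvalues with hlam
    set U : Matrix n n ℝ := (hTH.eigenvectorUnitary : Matrix n n ℝ) with hU
    have hspec : T = U * diagonal (RCLike.ofReal ∘ lam) * star U := hTH.spectral_theorem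
    have hUU : U * star U = 1 := Unitary.mul_star_self_of_mem hTH.eigenvectorUnitary.2
    have hone : (1 : Matrix n n ℝ) + T = U * (1 + diagonal (RCLike.ofReal ∘ lam)) * star U := by
      rw [mul_add, mul_one, add_mul, hUU, ← hspec]
    have hdet1T : (1 + T).det = ∏ i, (1 + lam i) := by
      rw [hone, det_mul_right_comm, hUU, one_mul, ← diagonal_one, diagonal_add, det_diagonal]
      simp
    have hlamnn : ∀ i, 0 ≤ lam i := fun i => hT.eigenvalues_nonneg i
    have hprodfacts := one_le_prod_real (s := Finset.univ) (f := fun i => 1 + lam i)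
      (fun i _ => show (1:ℝ) ≤ 1 + lam i by linarith [hlamnn i])
    have hprod1 : (1:ℝ) ≤ ∏ i, (1 + lam i) := hprodfacts.1
    have hdetPS : (P + S).det = P.det * (1 + T).det := by
      rw [key, det_mul, det_mul, ← hBB, det_mul]
      ring
    constructor
    · rw [hdetPS]
      exact le_mul_of_one_le_right hPd.det_pos.le (hdet1T ▸ hprod1)
    · constructor
      · intro h
        have h1 : (1 + T).det = 1 := by
          have h2 := hdetPS.symm.trans h
          have h3 : P.det * (1 + T).det = P.det * 1 := by rw [mul_one]; exact h2
          exact mul_left_cancel₀ hdet h3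
        have hall : ∀ i, 1 + lam i = 1 := fun i =>
          hprodfacts.2.mp (hdet1T.symm.trans h1) i (Finset.mem_univ i)
        have hlam0 : lam = 0 := funext fun i => by
          have := hall i; simp only [Pi.zero_apply]; linarith
        have hT0 : T = 0 := by
          rw [hspec, hlam0]
          have h0 : (RCLike.ofReal ∘ (0 : n → ℝ)) = fun _ => (0 : ℝ) := by
            funext i; simp
          rw [h0, Matrix.diagonal_zero, Matrix.mul_zero, Matrix.zero_mul]
        rw [← hBTB, hT0, Matrix.mul_zero, Matrix.zero_mul]
      · rintro rfl; simp
lemma twoBlock {m p : Type*} [Fintype m] [Fintype p] [DecidableEq m] [DecidableEq p]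
    {A : Matrix m m ℝ} {B : Matrix m p ℝ} {D : Matrix p p ℝ}
    (h : (fromBlocks A B Bᵀ D).PosDef) :
    (fromBlocks A B Bᵀ D).det ≤ A.det * D.det ∧
      ((fromBlocks A B Bᵀ D).det = A.det * D.det ↔ B = 0) := by
  have hBt : Bᴴ = Bᵀ := by ext i j; simp [conjTranspose_apply]
  have hA : A.PosDef := by
    have := posDef_submatrix_inj h Sum.inl_injective
    have heq : (fromBlocks A B Bᵀ D).submatrix Sum.inl Sum.inl = A := by
      ext i j; simp [submatrix_apply]
    rwa [heq] at this
  have hD : D.PosDef := by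
    have := posDef_submatrix_inj h Sum.inr_injective
    have heq : (fromBlocks A B Bᵀ D).submatrix Sum.inr Sum.inr = D := by
      ext i j; simp [submatrix_apply]
    rwa [heq] at this
  haveI : Invertible A := A.invertibleOfIsUnitDet hA.det_pos.ne'.isUnit
  have hdet : (fromBlocks A B Bᵀ D).det = A.det * (D - Bᵀ * A⁻¹ * B).det := by
    rw [det_fromBlocks₁₁, invOf_eq_nonsing_inv]
  set S := Bᵀ * A⁻¹ * B with hSdef
  have hSpsd : S.PosSemidef := by
    have := hA.inv.posSemidef.conjTranspose_mul_mul_same (B := B)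
    rwa [hBt] at this
  have hschur : (D - S).PosSemidef := by
    have h1 := h.posSemidef
    rw [← hBt] at h1
    have := (PosDef.fromBlocks₁₁ B D hA).mp h1
    rwa [hBt] at this
  have hDSS : D - S + S = D := sub_add_cancel D S
  have hmain := det_add_posSemidef hschur hSpsd (by rwa [hDSS])
  rw [hDSS] at hmain
  have hS0B : S = 0 ↔ B = 0 := by
    constructor
    · intro hS0
      have hBx : ∀ x : p → ℝ, B *ᵥ x = 0 := by
        intro x
        by_contra hx
        have hpos := (posDef_iff_dotProduct_mulVec.mp hA.inv).2 (x := B *ᵥ x) hx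
        have e1 : (0:ℝ) < star x ⬝ᵥ ((Bᴴ * A⁻¹ * B) *ᵥ x) := by
          simpa only [star_mulVec, dotProduct_mulVec, vecMul_vecMul] using hpos
        rw [hBt, ← hSdef, hS0] at e1
        simp at e1
      ext i j
      have := congrFun (hBx (Pi.single j 1)) i
      simpa [mulVec, dotProduct, Pi.single_apply, mul_ite] using this
    · rintro rfl; simp [hSdef]
  constructor
  · rw [hdet]
    exact mul_le_mul_of_nonneg_left hmain.1 hA.det_pos.le
  · rw [hdet, ← hS0B]
    constructor
    · intro hEq
      exact hmain.2.mp (mul_left_cancel₀ hA.det_pos.ne' hEq).symm |>.symm ▸ rfl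
    · intro hS0
      rw [hS0]
      simp
def sigmaFinSuccEquiv {r : ℕ} (d : Fin (r + 1) → ℕ) :
    ((i : Fin (r + 1)) × Fin (d i)) ≃ (Fin (d 0) ⊕ ((i : Fin r) × Fin (d i.succ))) where
  toFun x := Fin.cases (motive := fun i => Fin (d i) → Fin (d 0) ⊕ ((i : Fin r) × Fin (d i.succ)))
    (fun a => Sum.inl a) (fun j a => Sum.inr ⟨j, a⟩) x.1 x.2
  invFun := Sum.elim (fun a => ⟨0, a⟩) (fun p => ⟨p.1.succ, p.2⟩)
  left_inv := by
    rintro ⟨i, a⟩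
    induction i using Fin.cases <;> simp
  right_inv := by
    rintro (a | ⟨j, b⟩) <;> simp

theorem core : ∀ (r : ℕ) (d : Fin r → ℕ)
    (M : Matrix ((i : Fin r) × Fin (d i)) ((i : Fin r) × Fin (d i)) ℝ), M.PosDef →
    M.det ≤ ∏ i, (M.submatrix (Sigma.mk i) (Sigma.mk i)).det ∧
      (M.det = ∏ i, (M.submatrix (Sigma.mk i) (Sigma.mk i)).det ↔
        ∀ i j, i ≠ j → M.submatrix (Sigma.mk i) (Sigma.mk j) = 0)
  | 0, d, M, hM => by
      constructor
      · simp [Matrix.det_isEmpty]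
      · constructor
        · intro _ i
          exact i.elim0
        · intro _
          simp [Matrix.det_isEmpty]
  | (r + 1), d, M, hM => by
      set e := sigmaFinSuccEquiv d with he
      set N := M.submatrix e.symm e.symm with hN
      have hNpd : N.PosDef := posDef_submatrix_inj hM e.symm.injective
      have hNsym : ∀ a b, N a b = N b a := by
        intro a b
        conv_lhs => rw [← hNpd.1]
        simp [conjTranspose_apply]
      set A := N.toBlocks₁₁ with hA
      set B := N.toBlocks₁₂ with hB
      set D := N.toBlocks₂₂ with hD
      have h21 : N.toBlocks₂₁ = Bᵀ := by
        ext i j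
        exact hNsym (Sum.inr i) (Sum.inl j)
      have hfb : N = fromBlocks A B Bᵀ D := by
        conv_lhs => rw [← fromBlocks_toBlocks N]
        rw [h21]
      have hfbpd : (fromBlocks A B Bᵀ D).PosDef := hfb ▸ hNpd
      have hdetM : N.det = M.det := det_submatrix_equiv_self e.symm M
      have h2 := twoBlock hfbpd
      rw [← hfb, hdetM] at h2
      -- the D block is indexed by the tail sigma type
      have hDpd : D.PosDef := by
        have := posDef_submatrix_inj hNpd Sum.inr_injective
        have heq : N.submatrix Sum.inr Sum.inr = D := by ext i j; rfl
        rwa [heq] at this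
      have hApd : A.PosDef := by
        have := posDef_submatrix_inj hNpd Sum.inl_injective
        have heq : N.submatrix Sum.inl Sum.inl = A := by ext i j; rfl
        rwa [heq] at this
      obtain ⟨ih1, ih2⟩ := core r (fun i => d i.succ) D hDpd
      -- identification of diagonal blocks
      have hblock0 : A = M.submatrix (Sigma.mk 0) (Sigma.mk 0) := by ext i j; rfl
      have hblockS : ∀ i : Fin r, D.submatrix (Sigma.mk i) (Sigma.mk i)
          = M.submatrix (Sigma.mk i.succ) (Sigma.mk i.succ) := by intro i; ext a b; rfl
      have hprod : ∏ i : Fin (r + 1), (M.submatrix (Sigma.mk i) (Sigma.mk i)).det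
          = A.det * ∏ i : Fin r, (D.submatrix (Sigma.mk i) (Sigma.mk i)).det := by
        rw [Fin.prod_univ_succ, ← hblock0]
        exact congrArg (A.det * ·) (Finset.prod_congr rfl fun i _ => by rw [hblockS i])
      have Msym : ∀ p q, M p q = M q p := by
        intro p q
        conv_lhs => rw [← hM.1]
        simp [conjTranspose_apply]
      constructor
      · rw [hprod]
        calc M.det ≤ A.det * D.det := h2.1
          _ ≤ A.det * ∏ i : Fin r, (D.submatrix (Sigma.mk i) (Sigma.mk i)).det :=
              mul_le_mul_of_nonneg_left ih1 hApd.det_pos.le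
      · rw [hprod]
        constructor
        · intro hEq
          have hDeq : A.det * D.det
              = A.det * ∏ i : Fin r, (D.submatrix (Sigma.mk i) (Sigma.mk i)).det :=
            le_antisymm (mul_le_mul_of_nonneg_left ih1 hApd.det_pos.le) (hEq ▸ h2.1)
          have hDdet : D.det = ∏ i : Fin r, (D.submatrix (Sigma.mk i) (Sigma.mk i)).det :=
            mul_left_cancel₀ hApd.det_pos.ne' hDeq
          have hMAD : M.det = A.det * D.det := by rw [hEq, ← hDeq]
          have hB0 : B = 0 := h2.2.mp hMAD
          have hDoff := ih2.mp hDdet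
          intro i j hij
          induction i using Fin.cases with
          | zero =>
            induction j using Fin.cases with
            | zero => exact absurd rfl hij
            | succ k =>
              ext a b
              exact congrFun (congrFun hB0 a) ⟨k, b⟩
          | succ k =>
            induction j using Fin.cases with
            | zero =>
              ext a b
              show M ⟨k.succ, a⟩ ⟨0, b⟩ = 0
              rw [Msym ⟨k.succ, a⟩ ⟨0, b⟩]
              exact congrFun (congrFun hB0 b) ⟨k, a⟩
            | succ l =>
              have hkl : k ≠ l := fun h => hij (by rw [h])
              ext a b
              exact congrFun (congrFun (hDoff k l hkl) a) b
        · intro hz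
          have hB0 : B = 0 := by
            ext a pb
            obtain ⟨k, b⟩ := pb
            exact congrFun (congrFun (hz 0 k.succ (Fin.succ_ne_zero k).symm) a) b
          have hDoff : ∀ k l : Fin r, k ≠ l → D.submatrix (Sigma.mk k) (Sigma.mk l) = 0 := by
            intro k l hkl
            ext a b
            exact congrFun (congrFun
              (hz k.succ l.succ (fun h => hkl (Fin.succ_injective r h))) a) b
          have hDdet : D.det = ∏ i : Fin r, (D.submatrix (Sigma.mk i) (Sigma.mk i)).det :=
            ih2.mpr hDoff
          rw [h2.2.mpr hB0, hDdet]
lemma posDef_of_full_rank {n : ℕ} {m : Type*} [Fintype m] [DecidableEq m]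
    (J : Matrix (Fin n) m ℝ) (hrank : J.rank = Fintype.card m) : (Jᵀ * J).PosDef := by
  have hJH : Jᴴ = Jᵀ := by ext i j; simp [conjTranspose_apply]
  have hker : ∀ x : m → ℝ, J *ᵥ x = 0 → x = 0 := by
    have h1 : Module.finrank ℝ (LinearMap.range J.mulVecLin)
        + Module.finrank ℝ (LinearMap.ker J.mulVecLin) = Fintype.card m := by
      rw [LinearMap.finrank_range_add_finrank_ker J.mulVecLin, Module.finrank_pi]
    have h2 : Module.finrank ℝ (LinearMap.ker J.mulVecLin) = 0 := by
      have h0 : J.rank = Module.finrank ℝ (LinearMap.range J.mulVecLin) := rfl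
      rw [h0] at hrank
      omega
    have h3 : LinearMap.ker J.mulVecLin = ⊥ := Submodule.finrank_eq_zero.mp h2
    intro x hx
    have : x ∈ LinearMap.ker J.mulVecLin := by
      rw [LinearMap.mem_ker, mulVecLin_apply, hx]
    rwa [h3, Submodule.mem_bot] at this
  refine posDef_iff_dotProduct_mulVec.mpr ⟨?_, ?_⟩
  · rw [← hJH]; exact isHermitian_conjTranspose_mul_self J
  · intro x hx
    have hJx : J *ᵥ x ≠ 0 := fun h => hx (hker x h)
    have hpos : (0:ℝ) < (J *ᵥ x) ⬝ᵥ (J *ᵥ x) :=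
      lt_of_le_of_ne (Finset.sum_nonneg fun i _ => mul_self_nonneg _)
        (Ne.symm (fun h => hJx (dotProduct_self_eq_zero.mp h)))
    have : star (J *ᵥ x) ⬝ᵥ (J *ᵥ x) = star x ⬝ᵥ ((Jᴴ * J) *ᵥ x) := by
      simp only [star_mulVec, dotProduct_mulVec, vecMul_vecMul]
    rw [← hJH]
    rw [← this]
    simpa using hpos

/-- For a full-column-rank matrix `J` partitioned into column blocks, the pointwise mutual
information of the partition `∑ₖ log det(Jₖᵀ Jₖ) - log det(Jᵀ J)` is nonnegative, and
vanishes iff the blocks are pairwise orthogonal. -/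
theorem stmt9 {n r : ℕ} {d : Fin r → ℕ}
    (J : Matrix (Fin n) ((i : Fin r) × Fin (d i)) ℝ)
    (hrank : J.rank = Fintype.card ((i : Fin r) × Fin (d i))) :
    0 ≤ (∑ i : Fin r,
          Real.log ((J.submatrix id (Sigma.mk i))ᵀ * J.submatrix id (Sigma.mk i)).det)
        - Real.log (Jᵀ * J).det ∧
    ((∑ i : Fin r,
          Real.log ((J.submatrix id (Sigma.mk i))ᵀ * J.submatrix id (Sigma.mk i)).det)
        - Real.log (Jᵀ * J).det = 0
      ↔ ∀ i j : Fin r, i ≠ j →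
          (J.submatrix id (Sigma.mk i))ᵀ * J.submatrix id (Sigma.mk j) = 0) := by
  set M := Jᵀ * J with hM
  have hMpd : M.PosDef := posDef_of_full_rank J hrank
  have hik : ∀ i j : Fin r, M.submatrix (Sigma.mk i) (Sigma.mk j)
      = (J.submatrix id (Sigma.mk i))ᵀ * J.submatrix id (Sigma.mk j) := by
    intro i j
    ext a b
    simp [hM, mul_apply, submatrix_apply]
  have hblkpd : ∀ i : Fin r, ((J.submatrix id (Sigma.mk i))ᵀ * J.submatrix id (Sigma.mk i)).PosDef :=
    fun i => hik i i ▸ posDef_submatrix_inj hMpd sigma_mk_injective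
  obtain ⟨hle, hiff⟩ := core r d M hMpd
  have hprodeq : ∏ i, (M.submatrix (Sigma.mk i) (Sigma.mk i)).det
      = ∏ i, ((J.submatrix id (Sigma.mk i))ᵀ * J.submatrix id (Sigma.mk i)).det :=
    Finset.prod_congr rfl fun i _ => by rw [hik i]
  rw [hprodeq] at hle hiff
  have hprodpos : (0:ℝ) < ∏ i, ((J.submatrix id (Sigma.mk i))ᵀ * J.submatrix id (Sigma.mk i)).det :=
    Finset.prod_pos fun i _ => (hblkpd i).det_pos
  have hlogsum : ∑ i : Fin r,
        Real.log ((J.submatrix id (Sigma.mk i))ᵀ * J.submatrix id (Sigma.mk i)).det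
      = Real.log (∏ i, ((J.submatrix id (Sigma.mk i))ᵀ * J.submatrix id (Sigma.mk i)).det) :=
    (Real.log_prod fun i _ => (hblkpd i).det_pos.ne').symm
  rw [hlogsum]
  constructor
  · rw [sub_nonneg]
    exact Real.log_le_log hMpd.det_pos hle
  · rw [sub_eq_zero]
    constructor
    · intro h
      have hdeteq : (∏ i, ((J.submatrix id (Sigma.mk i))ᵀ * J.submatrix id (Sigma.mk i)).det)
          = M.det := by
        have := congrArg Real.exp h
        rwa [Real.exp_log hprodpos, Real.exp_log hMpd.det_pos] at this
      intro i j hij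
      rw [← hik i j]
      exact hiff.mp hdeteq.symm i j hij
    · intro h
      rw [hiff.mpr (fun i j hij => by rw [hik i j]; exact h i j hij)]
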